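/- Let A be an N×T matrix, λ an N×p matrix, and F a T×q matrix. Then Tr(M_λ A M_F A') ≥ Σ_{r=p+q+1}^{T} μ_r(A'A). -/

import Mathlib

open Matrix MeasureTheory
open scoped BigOperators

/-- Squared Frobenius (Hilbert–Schmidt) norm of a real matrix. -/
noncomputable def frobSq {n m : ℕ} (A : Matrix (Fin n) (Fin m) ℝ) : ℝ :=
  Matrix.trace (A * Aᵀ)

/-- Operator (spectral) norm of a real matrix. -/
noncomputable def opNorm {n m : ℕ} (A : Matrix (Fin n) (Fin m) ℝ) : ℝ :=
  ‖LinearMap.toContinuousLinearMap (Matrix.toEuclideanLin A)‖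

/-- Orthogonal projection matrix onto the column space of `A`. -/
noncomputable def projMat {n m : ℕ} (A : Matrix (Fin n) (Fin m) ℝ) : Matrix (Fin n) (Fin n) ℝ :=
  Matrix.toEuclideanLin.symm
    (((LinearMap.range (Matrix.toEuclideanLin A)).subtypeL.comp
      (Submodule.orthogonalProjectionOnto (LinearMap.range (Matrix.toEuclideanLin A))) :
        EuclideanSpace ℝ (Fin n) →L[ℝ] EuclideanSpace ℝ (Fin n)) :
        EuclideanSpace ℝ (Fin n) →ₗ[ℝ] EuclideanSpace ℝ (Fin n))

/-- Annihilator `M_A = I - P_A`. -/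
noncomputable def annMat {n m : ℕ} (A : Matrix (Fin n) (Fin m) ℝ) : Matrix (Fin n) (Fin n) ℝ :=
  1 - projMat A

/-- `mu S r` is the `r`-th largest eigenvalue (1-based, with multiplicity) of the
symmetric matrix `S`; it is `0` if `S` is not symmetric or `r ∉ {1,…,n}`. -/
noncomputable def mu {n : ℕ} (S : Matrix (Fin n) (Fin n) ℝ) (r : ℕ) : ℝ :=
  if h : S.IsHermitian ∧ 1 ≤ r ∧ r ≤ n then
    (h.1.eigenvalues ∘ Tuple.sort h.1.eigenvalues)
      (Fin.rev ⟨r - 1, by obtain ⟨-, h1, h2⟩ := h; omega⟩)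
  else 0

section Stmt4Aux
variable {n m k : ℕ}

/-- Projection matrix onto a subspace. -/
noncomputable def pmat (U : Submodule ℝ (EuclideanSpace ℝ (Fin n))) : Matrix (Fin n) (Fin n) ℝ :=
  Matrix.toEuclideanLin.symm
    ((U.subtypeL.comp (Submodule.orthogonalProjectionOnto U) :
        EuclideanSpace ℝ (Fin n) →L[ℝ] EuclideanSpace ℝ (Fin n)) :
        EuclideanSpace ℝ (Fin n) →ₗ[ℝ] EuclideanSpace ℝ (Fin n))

lemma projMat_eq_pmat (A : Matrix (Fin n) (Fin m) ℝ) :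
    projMat A = pmat (LinearMap.range (Matrix.toEuclideanLin A)) := rfl

lemma toEuclideanLin_pmat (U : Submodule ℝ (EuclideanSpace ℝ (Fin n))) :
    Matrix.toEuclideanLin (pmat U) =
      ((U.subtypeL.comp (Submodule.orthogonalProjectionOnto U) :
        EuclideanSpace ℝ (Fin n) →L[ℝ] EuclideanSpace ℝ (Fin n)) :
        EuclideanSpace ℝ (Fin n) →ₗ[ℝ] EuclideanSpace ℝ (Fin n)) :=
  Matrix.toEuclideanLin.apply_symm_apply _

lemma toEuclideanLin_mul {a b c : ℕ} (A : Matrix (Fin a) (Fin b) ℝ) (B : Matrix (Fin b) (Fin c) ℝ) :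
    Matrix.toEuclideanLin (A * B) =
      (Matrix.toEuclideanLin A).comp (Matrix.toEuclideanLin B) := by
  simp only [Matrix.toEuclideanLin_eq_toLin]
  exact Matrix.toLin_mul _ _ _ A B

lemma pmat_apply_mem (U : Submodule ℝ (EuclideanSpace ℝ (Fin n))) (x : EuclideanSpace ℝ (Fin n)) :
    Matrix.toEuclideanLin (pmat U) x ∈ U := by
  rw [toEuclideanLin_pmat]
  exact (Submodule.orthogonalProjectionOnto U x).2

lemma pmat_apply_of_mem {U : Submodule ℝ (EuclideanSpace ℝ (Fin n))} {x : EuclideanSpace ℝ (Fin n)}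
    (hx : x ∈ U) : Matrix.toEuclideanLin (pmat U) x = x := by
  rw [toEuclideanLin_pmat]
  exact Submodule.starProjection_eq_self_iff.mpr hx

lemma pmat_mul_pmat (U : Submodule ℝ (EuclideanSpace ℝ (Fin n))) :
    pmat U * pmat U = pmat U := by
  apply Matrix.toEuclideanLin.injective
  rw [toEuclideanLin_mul]
  refine LinearMap.ext fun x => ?_
  simp only [LinearMap.comp_apply]
  exact pmat_apply_of_mem (pmat_apply_mem U x)

lemma pmat_transpose (U : Submodule ℝ (EuclideanSpace ℝ (Fin n))) :
    (pmat U)ᵀ = pmat U := by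
  rw [← Matrix.conjTranspose_eq_transpose_of_trivial]
  apply Matrix.toEuclideanLin.injective
  rw [Matrix.toEuclideanLin_conjTranspose_eq_adjoint, toEuclideanLin_pmat]
  exact LinearMap.isSelfAdjoint_iff'.mp ((LinearMap.isSymmetric_iff_isSelfAdjoint _).mp
    (Submodule.starProjection_isSymmetric (K := U)))

lemma trace_pmat (U : Submodule ℝ (EuclideanSpace ℝ (Fin n))) :
    Matrix.trace (pmat U) = (Module.finrank ℝ U : ℝ) := by
  have h1 : Matrix.trace (pmat U) =
      LinearMap.trace ℝ _ (Matrix.toEuclideanLin (pmat U)) := by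
    rw [LinearMap.trace_eq_matrix_trace ℝ (PiLp.basisFun 2 ℝ (Fin n)),
      Matrix.toEuclideanLin_eq_toLin, LinearMap.toMatrix_toLin]
  rw [h1, toEuclideanLin_pmat]
  exact LinearMap.IsProj.trace
    ⟨fun x => (Submodule.orthogonalProjectionOnto U x).2,
     fun x hx => Submodule.starProjection_eq_self_iff.mpr hx⟩

end Stmt4Aux

lemma diag_conjT_nonneg {a b : ℕ} (X : Matrix (Fin a) (Fin b) ℝ) (i : Fin b) :
    0 ≤ (Xᴴ * X) i i := by
  simp only [Matrix.mul_apply, Matrix.conjTranspose_apply, star_trivial]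
  exact Finset.sum_nonneg fun j _ => mul_self_nonneg _

lemma trace_transpose_mul_self_nonneg {a b : ℕ} (X : Matrix (Fin a) (Fin b) ℝ) :
    0 ≤ Matrix.trace (Xᵀ * X) := by
  rw [← Matrix.conjTranspose_eq_transpose_of_trivial]
  exact Finset.sum_nonneg fun i _ => diag_conjT_nonneg X i

lemma mu_eq {T : ℕ} {S : Matrix (Fin T) (Fin T) ℝ} (hS : S.IsHermitian) {r : ℕ}
    (h1 : 1 ≤ r) (h2 : r ≤ T) :
    mu S r = (hS.eigenvalues ∘ Tuple.sort hS.eigenvalues) ⟨T - r, by omega⟩ := by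
  rw [mu, dif_pos ⟨hS, h1, h2⟩]
  congr 1
  exact Fin.ext (by simp [Fin.rev]; omega)

lemma sum_filter_split {T : ℕ} (t : ℕ) (f : Fin T → ℝ) :
    ∑ i, f i = ∑ i ∈ Finset.univ.filter (fun i : Fin T => (i : ℕ) < t), f i +
      ∑ i ∈ Finset.univ.filter (fun i : Fin T => t ≤ (i : ℕ)), f i := by
  rw [← Finset.sum_filter_add_sum_filter_not Finset.univ (fun i : Fin T => (i : ℕ) < t) f]
  congr 1
  apply Finset.sum_congr _ (fun _ _ => rfl)
  ext i; simp [not_lt]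

lemma sum_mu_eq {T k : ℕ} {S : Matrix (Fin T) (Fin T) ℝ} (hS : S.IsHermitian) :
    ∑ r ∈ Finset.Icc (k + 1) T, mu S r =
      ∑ i ∈ Finset.univ.filter (fun i : Fin T => (i : ℕ) < T - k),
        (hS.eigenvalues ∘ Tuple.sort hS.eigenvalues) i := by
  refine Finset.sum_bij'
    (i := fun r hr => (⟨T - r, by simp only [Finset.mem_Icc] at hr; omega⟩ : Fin T))
    (j := fun i hi => T - (i : ℕ)) ?_ ?_ ?_ ?_ ?_
  · intro r hr
    simp only [Finset.mem_Icc] at hr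
    simp only [Finset.mem_filter, Finset.mem_univ, true_and]
    omega
  · intro i hi
    simp only [Finset.mem_filter, Finset.mem_univ, true_and] at hi
    simp only [Finset.mem_Icc]
    omega
  · intro r hr
    simp only [Finset.mem_Icc] at hr
    show T - (T - r) = r
    omega
  · intro i hi
    simp only [Finset.mem_filter, Finset.mem_univ, true_and] at hi
    exact Fin.ext (by simp; omega)
  · intro r hr
    simp only [Finset.mem_Icc] at hr
    rw [mu_eq hS (by omega) hr.2]

lemma card_filter_le {T t : ℕ} (ht : t ≤ T) :
    (Finset.univ.filter (fun i : Fin T => t ≤ (i : ℕ))).card = T - t := by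
  have h1 : (Finset.univ.filter (fun i : Fin T => (i : ℕ) < t)).card = t := by
    have : Finset.univ.filter (fun i : Fin T => (i : ℕ) < t)
        = Finset.map (Fin.castLEEmb ht) Finset.univ := by
      ext j
      simp only [Finset.mem_filter, Finset.mem_univ, true_and, Finset.mem_map,
        Fin.castLEEmb_apply]
      constructor
      · intro hj; exact ⟨⟨j, hj⟩, rfl⟩
      · rintro ⟨a, rfl⟩; exact a.2
    simp [this]
  have h2 := Finset.card_filter_add_card_filter_not (s := (Finset.univ : Finset (Fin T)))
    (p := fun i : Fin T => (i : ℕ) < t)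
  simp only [Finset.card_univ, Fintype.card_fin, not_lt] at h2
  omega

lemma core_sum_le {T : ℕ} (g c : Fin T → ℝ) (hg : Monotone g) (hg0 : ∀ i, 0 ≤ g i)
    (hc0 : ∀ i, 0 ≤ c i) (hc1 : ∀ i, c i ≤ 1) (t : ℕ) (ht : t ≤ T)
    (hsum : ∑ i, c i ≤ ((T - t : ℕ) : ℝ)) :
    ∑ i, g i * c i ≤ ∑ i ∈ Finset.univ.filter (fun i : Fin T => t ≤ (i : ℕ)), g i := by
  by_cases hT : T ≤ t
  · -- t = T : all c i = 0
    have h0 : ((T - t : ℕ) : ℝ) = 0 := by simp [Nat.sub_eq_zero_of_le hT]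
    rw [h0] at hsum
    have hc : ∀ i, c i = 0 := by
      intro i
      have h1 : c i ≤ ∑ j, c j :=
        Finset.single_le_sum (fun j _ => hc0 j) (Finset.mem_univ i)
      exact le_antisymm (le_trans h1 hsum) (hc0 i)
    calc ∑ i, g i * c i = 0 := by simp [hc]
    _ ≤ _ := Finset.sum_nonneg fun i _ => hg0 i
  · have htlt : t < T := lt_of_not_ge hT
    set v := g ⟨t, htlt⟩ with hv
    have hsplit : ∀ f : Fin T → ℝ, ∑ i, f i =
        ∑ i ∈ Finset.univ.filter (fun i : Fin T => (i : ℕ) < t), f i +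
        ∑ i ∈ Finset.univ.filter (fun i : Fin T => t ≤ (i : ℕ)), f i := by
      intro f
      rw [← Finset.sum_filter_add_sum_filter_not Finset.univ (fun i : Fin T => (i : ℕ) < t) f]
      congr 1
      apply Finset.sum_congr _ (fun _ _ => rfl)
      ext i; simp [not_lt]
    set s₁ := Finset.univ.filter (fun i : Fin T => (i : ℕ) < t) with hs₁
    set s₂ := Finset.univ.filter (fun i : Fin T => t ≤ (i : ℕ)) with hs₂
    have hcard : (s₂.card : ℝ) = ((T - t : ℕ) : ℝ) := by rw [card_filter_le ht]
    have h1 : ∑ i ∈ s₁, g i * c i ≤ ∑ i ∈ s₁, v * c i := by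
      refine Finset.sum_le_sum fun i hi => ?_
      have hi' : (i : ℕ) < t := by simpa [hs₁] using hi
      exact mul_le_mul_of_nonneg_right (hg (by exact le_of_lt hi')) (hc0 i)
    have h2 : ∑ i ∈ s₂, g i * c i ≤ ∑ i ∈ s₂, (g i + v * (c i - 1)) := by
      refine Finset.sum_le_sum fun i hi => ?_
      have hi' : t ≤ (i : ℕ) := by simpa [hs₂] using hi
      have hgv : v ≤ g i := hg (by exact hi')
      nlinarith [hc1 i, hc0 i]
    have hv0 : 0 ≤ v := hg0 _
    have hccle : ∑ i ∈ s₁, c i + ∑ i ∈ s₂, c i ≤ ((T - t : ℕ) : ℝ) := by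
      rw [← hsplit c]; exact hsum
    have expand : ∑ i ∈ s₂, (g i + v * (c i - 1)) =
        ∑ i ∈ s₂, g i + v * (∑ i ∈ s₂, c i) - v * s₂.card := by
      rw [Finset.sum_add_distrib, ← Finset.mul_sum, Finset.sum_sub_distrib,
        Finset.sum_const, nsmul_eq_mul]
      ring
    calc ∑ i, g i * c i = ∑ i ∈ s₁, g i * c i + ∑ i ∈ s₂, g i * c i := hsplit _
      _ ≤ ∑ i ∈ s₁, v * c i + (∑ i ∈ s₂, g i + v * (∑ i ∈ s₂, c i) - v * s₂.card) := by
          rw [← expand]; exact add_le_add h1 h2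
      _ = ∑ i ∈ s₂, g i + v * ((∑ i ∈ s₁, c i + ∑ i ∈ s₂, c i) - s₂.card) := by
          rw [← Finset.mul_sum]; ring
      _ ≤ ∑ i ∈ s₂, g i := by
          have : (∑ i ∈ s₁, c i + ∑ i ∈ s₂, c i) - (s₂.card : ℝ) ≤ 0 := by
            rw [hcard]; linarith
          nlinarith

lemma kyfan_trace {T : ℕ} (S P : Matrix (Fin T) (Fin T) ℝ) (hS : S.IsHermitian)
    (hd : ∀ i, 0 ≤ hS.eigenvalues i)
    (hPt : Pᵀ = P) (hPP : P * P = P) (k : ℕ)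
    (htr : Matrix.trace P ≤ (k : ℝ)) :
    ∑ r ∈ Finset.Icc (k + 1) T, mu S r ≤ Matrix.trace S - Matrix.trace (S * P) := by
  set d := hS.eigenvalues with hdd
  set V := (hS.eigenvectorUnitary : Matrix (Fin T) (Fin T) ℝ) with hVd
  have hV1 : Vᴴ * V = 1 := by
    rw [← Matrix.star_eq_conjTranspose]
    exact Matrix.mem_unitaryGroup_iff'.mp hS.eigenvectorUnitary.2
  have hV2 : V * Vᴴ = 1 := by
    rw [← Matrix.star_eq_conjTranspose]
    exact Matrix.mem_unitaryGroup_iff.mp hS.eigenvectorUnitary.2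
  have hspec : S = V * Matrix.diagonal d * Vᴴ := by
    have h := hS.spectral_theorem
    rw [Unitary.conjStarAlgAut_apply, Matrix.star_eq_conjTranspose] at h
    simpa using h
  have hPh : Pᴴ = P := by rwa [Matrix.conjTranspose_eq_transpose_of_trivial]
  set Cm := Vᴴ * P * V with hCmd
  set c : Fin T → ℝ := fun i => Cm i i with hcd
  -- the diagonal entries of Cm are in [0,1] and sum to trace P
  have hPPV : P * (P * V) = P * V := by rw [← Matrix.mul_assoc, hPP]
  have hCmeq : Cm = (P * V)ᴴ * (P * V) := by
    rw [Matrix.conjTranspose_mul, hPh, hCmd, Matrix.mul_assoc Vᴴ P (P * V), hPPV,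
      ← Matrix.mul_assoc]
  have hc0 : ∀ i, 0 ≤ c i := fun i => by
    rw [hcd]; simp only; rw [hCmeq]; exact diag_conjT_nonneg _ i
  have hQt : ((1 : Matrix (Fin T) (Fin T) ℝ) - P)ᴴ = 1 - P := by
    rw [Matrix.conjTranspose_sub, Matrix.conjTranspose_one, hPh]
  have hQQ : ((1 : Matrix (Fin T) (Fin T) ℝ) - P) * (1 - P) = 1 - P := by
    simp [Matrix.sub_mul, Matrix.mul_sub, hPP]
  have hComp : ((1 - P) * V)ᴴ * ((1 - P) * V) = 1 - Cm := by
    have h1 : ((1 : Matrix (Fin T) (Fin T) ℝ) - P) * V = V - P * V := by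
      rw [Matrix.sub_mul, Matrix.one_mul]
    have h2 : ((1 : Matrix (Fin T) (Fin T) ℝ) - P) * ((1 - P) * V) = (1 - P) * V := by
      rw [← Matrix.mul_assoc, hQQ]
    rw [Matrix.conjTranspose_mul, hQt, Matrix.mul_assoc Vᴴ (1 - P) ((1 - P) * V), h2, h1,
      Matrix.mul_sub, hV1, ← Matrix.mul_assoc]
  have hc1 : ∀ i, c i ≤ 1 := by
    intro i
    have h0 : 0 ≤ ((1 : Matrix (Fin T) (Fin T) ℝ) - Cm) i i := by
      rw [← hComp]; exact diag_conjT_nonneg _ i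
    have : ((1 : Matrix (Fin T) (Fin T) ℝ) - Cm) i i = 1 - c i := by
      simp [Matrix.sub_apply, Matrix.one_apply_eq, hcd]
    linarith [this ▸ h0]
  have hcsum : ∑ i, c i = Matrix.trace P := by
    have : ∑ i, c i = Matrix.trace Cm := rfl
    rw [this, hCmd, Matrix.trace_mul_comm (Vᴴ * P) V, ← Matrix.mul_assoc, hV2,
      Matrix.one_mul]
  have htrSP : Matrix.trace (S * P) = ∑ i, d i * c i := by
    have h1 : Matrix.trace (S * P) = Matrix.trace (Matrix.diagonal d * Cm) := by
      rw [hspec, hCmd]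
      rw [show V * Matrix.diagonal d * Vᴴ * P = V * (Matrix.diagonal d * (Vᴴ * P)) by
        simp only [Matrix.mul_assoc]]
      rw [Matrix.trace_mul_comm V (Matrix.diagonal d * (Vᴴ * P))]
      simp only [Matrix.mul_assoc]
    rw [h1]
    simp only [Matrix.trace, Matrix.diag, Matrix.diagonal_mul]
    rfl
  have htrS : Matrix.trace S = ∑ i, d i := by
    rw [hspec, Matrix.trace_mul_comm (V * Matrix.diagonal d) Vᴴ, ← Matrix.mul_assoc,
      hV1, Matrix.one_mul, Matrix.trace_diagonal]
  set σ := Tuple.sort d with hσd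
  set g := d ∘ σ with hgd
  have hg : Monotone g := Tuple.monotone_sort d
  have hg0 : ∀ i, 0 ≤ g i := fun i => hd _
  set c' := c ∘ σ with hc'd
  have hsum_dc : ∑ i, d i * c i = ∑ i, g i * c' i := by
    rw [hgd, hc'd]
    exact (Equiv.sum_comp σ (fun i => d i * c i)).symm
  have hsum_c' : ∑ i, c' i = ∑ i, c i := Equiv.sum_comp σ c
  have hsum_g : ∑ i, g i = ∑ i, d i := Equiv.sum_comp σ d
  -- apply the core lemma with t = T - k
  have hcore : ∑ i, g i * c' i ≤
      ∑ i ∈ Finset.univ.filter (fun i : Fin T => T - k ≤ (i : ℕ)), g i := by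
    refine core_sum_le g c' hg hg0 (fun i => hc0 _) (fun i => hc1 _) (T - k)
      (Nat.sub_le _ _) ?_
    rw [hsum_c', hcsum]
    rcases le_or_gt k T with h | h
    · rw [Nat.sub_sub_self h]; exact htr
    · have h2 : T - (T - k) = T := by omega
      rw [h2]
      have : ∑ i, c i ≤ ∑ i : Fin T, (1 : ℝ) :=
        Finset.sum_le_sum fun i _ => hc1 i
      simpa using le_trans (le_of_eq hcsum.symm) this
  have hsplit := sum_filter_split (T := T) (T - k) g
  rw [sum_mu_eq (k := k) hS]
  have hfun : (hS.eigenvalues ∘ Tuple.sort hS.eigenvalues) = g := by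
    rw [hgd, hσd, hdd]
  rw [hfun, htrS, ← hsum_g, htrSP, hsum_dc, hsplit]
  linarith [hcore]

theorem statement4_aux {N T p q : ℕ} (A : Matrix (Fin N) (Fin T) ℝ)
    (lam : Matrix (Fin N) (Fin p) ℝ) (F : Matrix (Fin T) (Fin q) ℝ) :
    Matrix.trace (annMat lam * A * annMat F * Aᵀ) ≥
      ∑ r ∈ Finset.Icc (p + q + 1) T, mu (Aᵀ * A) r := by
  classical
  have hPSD : (Aᵀ * A).PosSemidef := by
    have h := Matrix.posSemidef_conjTranspose_mul_self A
    rwa [Matrix.conjTranspose_eq_transpose_of_trivial] at h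
  have hS : (Aᵀ * A).IsHermitian := hPSD.isHermitian
  have hd : ∀ i, 0 ≤ hS.eigenvalues i := fun i => hPSD.eigenvalues_nonneg i
  -- projections and annihilators
  have hPlt : (projMat lam)ᵀ = projMat lam := by rw [projMat_eq_pmat]; exact pmat_transpose _
  have hPFt : (projMat F)ᵀ = projMat F := by rw [projMat_eq_pmat]; exact pmat_transpose _
  have hPlP : projMat lam * projMat lam = projMat lam := by
    rw [projMat_eq_pmat]; exact pmat_mul_pmat _
  have hPFP : projMat F * projMat F = projMat F := by
    rw [projMat_eq_pmat]; exact pmat_mul_pmat _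
  have hMlt : (annMat lam)ᵀ = annMat lam := by
    rw [annMat, Matrix.transpose_sub, Matrix.transpose_one, hPlt]
  have hMFt : (annMat F)ᵀ = annMat F := by
    rw [annMat, Matrix.transpose_sub, Matrix.transpose_one, hPFt]
  have hMlM : annMat lam * annMat lam = annMat lam := by
    simp [annMat, Matrix.sub_mul, Matrix.mul_sub, hPlP]
  have hMFM : annMat F * annMat F = annMat F := by
    simp [annMat, Matrix.sub_mul, Matrix.mul_sub, hPFP]
  -- the combined subspace
  set Usub := LinearMap.range (Matrix.toEuclideanLin (Aᵀ * lam)) ⊔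
      LinearMap.range (Matrix.toEuclideanLin F) with hUsub
  set Pb := pmat Usub with hPb
  have hPbt : Pbᵀ = Pb := pmat_transpose _
  have hPbP : Pb * Pb = Pb := pmat_mul_pmat _
  have htrPb : Matrix.trace Pb ≤ ((p + q : ℕ) : ℝ) := by
    rw [hPb, trace_pmat]
    have h1 : Module.finrank ℝ Usub ≤ p + q := by
      refine le_trans (Submodule.finrank_add_le_finrank_add_finrank _ _) ?_
      have h2 := LinearMap.finrank_range_le (Matrix.toEuclideanLin (Aᵀ * lam))
      have h3 := LinearMap.finrank_range_le (Matrix.toEuclideanLin F)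
      rw [finrank_euclideanSpace_fin] at h2 h3
      omega
    exact_mod_cast h1
  -- the low-rank correction C
  set C := projMat lam * A + annMat lam * A * projMat F with hC
  have hPCt : Pb * Cᵀ = Cᵀ := by
    apply Matrix.toEuclideanLin.injective
    rw [toEuclideanLin_mul]
    refine LinearMap.ext fun x => ?_
    simp only [LinearMap.comp_apply]
    refine pmat_apply_of_mem ?_
    have hCt : Cᵀ = Aᵀ * projMat lam + projMat F * (Aᵀ * annMat lam) := by
      rw [hC, Matrix.transpose_add, Matrix.transpose_mul, Matrix.transpose_mul,
        Matrix.transpose_mul, hPlt, hPFt, hMlt]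
    rw [hCt, map_add, LinearMap.add_apply]
    refine Submodule.add_mem _ ?_ ?_
    · rw [toEuclideanLin_mul]
      simp only [LinearMap.comp_apply]
      have hmem : Matrix.toEuclideanLin (projMat lam) x ∈
          LinearMap.range (Matrix.toEuclideanLin lam) := by
        rw [projMat_eq_pmat]; exact pmat_apply_mem _ _
      obtain ⟨z, hz⟩ := hmem
      refine Submodule.mem_sup_left ⟨z, ?_⟩
      rw [toEuclideanLin_mul]
      simp only [LinearMap.comp_apply, hz]
    · rw [toEuclideanLin_mul]
      simp only [LinearMap.comp_apply]
      refine Submodule.mem_sup_right ?_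
      rw [projMat_eq_pmat]
      exact pmat_apply_mem _ _
  have hCP : C * Pb = C := by
    have h := congrArg Matrix.transpose hPCt
    rwa [Matrix.transpose_mul, Matrix.transpose_transpose, hPbt] at h
  -- B = A - C
  set B := annMat lam * A * annMat F with hB
  have hBC : B = A - C := by
    rw [hB, hC, annMat, annMat, Matrix.sub_mul, Matrix.mul_sub, Matrix.one_mul,
      Matrix.mul_one, Matrix.sub_mul]
    abel
  have hBM : B * (1 - Pb) = A * (1 - Pb) := by
    rw [hBC, Matrix.sub_mul, Matrix.mul_sub C, Matrix.mul_one, hCP, sub_self, sub_zero]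
  -- step 1: the trace identity
  have hMF2 : ∀ X : Matrix (Fin T) (Fin N) ℝ, annMat F * (annMat F * X) = annMat F * X :=
    fun X => by rw [← Matrix.mul_assoc, hMFM]
  have hMl2 : ∀ X : Matrix (Fin N) (Fin N) ℝ, annMat lam * (annMat lam * X) = annMat lam * X :=
    fun X => by rw [← Matrix.mul_assoc, hMlM]
  have hBt : Bᵀ = annMat F * (Aᵀ * annMat lam) := by
    rw [hB, Matrix.transpose_mul, Matrix.transpose_mul, hMlt, hMFt]
  have key1 : Matrix.trace (annMat lam * A * annMat F * Aᵀ) = Matrix.trace (Bᵀ * B) := by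
    rw [Matrix.trace_mul_comm Bᵀ B, hBt, hB]
    simp only [Matrix.mul_assoc]
    rw [hMF2]
    have h9 : annMat lam * (A * (annMat F * (Aᵀ * annMat lam)))
        = (annMat lam * (A * (annMat F * Aᵀ))) * annMat lam := by
      simp only [Matrix.mul_assoc]
    rw [h9, Matrix.trace_mul_comm (annMat lam * (A * (annMat F * Aᵀ))) (annMat lam), hMl2]
  -- step 2: the decomposition
  have hM : (1 : Matrix (Fin T) (Fin T) ℝ) - Pb + Pb = 1 := sub_add_cancel _ _
  have hMt : ((1 : Matrix (Fin T) (Fin T) ℝ) - Pb)ᵀ = 1 - Pb := by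
    rw [Matrix.transpose_sub, Matrix.transpose_one, hPbt]
  have hMM : ((1 : Matrix (Fin T) (Fin T) ℝ) - Pb) * (1 - Pb) = 1 - Pb := by
    simp [Matrix.sub_mul, Matrix.mul_sub, hPbP]
  have trproj : ∀ (Q : Matrix (Fin T) (Fin T) ℝ), Qᵀ = Q → Q * Q = Q →
      Matrix.trace ((B * Q)ᵀ * (B * Q)) = Matrix.trace (Bᵀ * (B * Q)) := by
    intro Q hQt hQQ
    rw [Matrix.transpose_mul, hQt, Matrix.mul_assoc]
    rw [Matrix.trace_mul_comm Q (Bᵀ * (B * Q))]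
    simp only [Matrix.mul_assoc]
    rw [hQQ]
  have key2 : Matrix.trace (Bᵀ * B) =
      Matrix.trace ((B * (1 - Pb))ᵀ * (B * (1 - Pb))) +
      Matrix.trace ((B * Pb)ᵀ * (B * Pb)) := by
    rw [trproj _ hMt hMM, trproj _ hPbt hPbP, ← Matrix.trace_add, ← Matrix.mul_add,
      ← Matrix.mul_add, hM, Matrix.mul_one]
  -- step 3
  have key3 : Matrix.trace ((B * (1 - Pb))ᵀ * (B * (1 - Pb))) =
      Matrix.trace (Aᵀ * A) - Matrix.trace ((Aᵀ * A) * Pb) := by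
    rw [hBM, Matrix.transpose_mul, hMt]
    rw [Matrix.mul_assoc, Matrix.trace_mul_comm (1 - Pb) (Aᵀ * (A * (1 - Pb)))]
    simp only [Matrix.mul_assoc]
    rw [hMM]
    rw [show Aᵀ * (A * (1 - Pb)) = (Aᵀ * A) * (1 - Pb) from (Matrix.mul_assoc _ _ _).symm]
    rw [Matrix.mul_sub, Matrix.mul_one, Matrix.trace_sub]
    simp only [Matrix.mul_assoc]
  have key4 : 0 ≤ Matrix.trace ((B * Pb)ᵀ * (B * Pb)) := trace_transpose_mul_self_nonneg _
  have key5 := kyfan_trace (Aᵀ * A) Pb hS hd hPbt hPbP (p + q) htrPb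
  rw [ge_iff_le, key1]
  calc ∑ r ∈ Finset.Icc (p + q + 1) T, mu (Aᵀ * A) r
      ≤ Matrix.trace (Aᵀ * A) - Matrix.trace ((Aᵀ * A) * Pb) := key5
    _ ≤ Matrix.trace (Bᵀ * B) := by rw [key2, ← key3]; linarith

/-- Tr(M_λ A M_F A') ≥ Σ_{r=p+q+1}^{T} μ_r(A'A). -/
theorem statement4 {N T p q : ℕ} (A : Matrix (Fin N) (Fin T) ℝ)
    (lam : Matrix (Fin N) (Fin p) ℝ) (F : Matrix (Fin T) (Fin q) ℝ) :
    Matrix.trace (annMat lam * A * annMat F * Aᵀ) ≥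
      ∑ r ∈ Finset.Icc (p + q + 1) T, mu (Aᵀ * A) r :=
  statement4_aux A lam F
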